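/- The function g(t) = e^{-1/t} is absolutely monotonic on the interval (-∞,0); that is, for every integer i ≥ 0 and every t < 0, g^{(i)}(t) ≥ 0. -/

import Mathlib

open Polynomial Real Filter

noncomputable def expAuxQ : ℕ → Polynomial ℝ
  | 0 => 1
  | n+1 => (expAuxQ n + derivative (expAuxQ n)) * X ^ 2

lemma expAuxQ_coeff_nonneg (n k : ℕ) : 0 ≤ (expAuxQ n).coeff k := by
  induction n generalizing k with
  | zero =>
    simp only [expAuxQ, Polynomial.coeff_one]
    split <;> norm_num
  | succ n ih =>
    rw [expAuxQ, Polynomial.coeff_mul_X_pow']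
    split
    · rw [Polynomial.coeff_add, Polynomial.coeff_derivative]
      have h1 := ih (k - 2)
      have h2 := ih (k - 2 + 1)
      positivity
    · exact le_refl 0

lemma expAuxQ_eval_nonneg (n : ℕ) {x : ℝ} (hx : 0 ≤ x) : 0 ≤ (expAuxQ n).eval x := by
  rw [Polynomial.eval_eq_sum_range]
  exact Finset.sum_nonneg fun k _ => mul_nonneg (expAuxQ_coeff_nonneg n k) (pow_nonneg hx k)

lemma expAux_hasDerivAt (n : ℕ) {s : ℝ} (hs : s < 0) :
    HasDerivAt (fun x : ℝ => (expAuxQ n).eval (-1 / x) * Real.exp (-1 / x))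
      ((expAuxQ (n + 1)).eval (-1 / s) * Real.exp (-1 / s)) s := by
  have hs0 : s ≠ 0 := hs.ne
  have h1 : HasDerivAt (fun x : ℝ => -1 / x) (1 / s ^ 2) s := by
    simpa [neg_div, one_div] using (hasDerivAt_inv hs0).fun_neg
  have hp : HasDerivAt (fun x : ℝ => (expAuxQ n).eval (-1 / x))
      ((derivative (expAuxQ n)).eval (-1 / s) * (1 / s ^ 2)) s :=
    ((expAuxQ n).hasDerivAt (-1 / s)).comp s h1
  have he : HasDerivAt (fun x : ℝ => Real.exp (-1 / x))
      (Real.exp (-1 / s) * (1 / s ^ 2)) s :=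
    (Real.hasDerivAt_exp (-1 / s)).comp s h1
  have := hp.fun_mul he
  refine this.congr_deriv ?_
  have hu : (-1 / s) ^ 2 = 1 / s ^ 2 := by
    field_simp
  rw [expAuxQ]
  simp only [Polynomial.eval_mul, Polynomial.eval_add, Polynomial.eval_pow, Polynomial.eval_X, hu]
  ring

lemma expAux_iteratedDeriv (n : ℕ) : ∀ t : ℝ, t < 0 →
    iteratedDeriv n (fun x : ℝ => Real.exp (-1 / x)) t
      = (expAuxQ n).eval (-1 / t) * Real.exp (-1 / t) := by
  induction n with
  | zero => intro t ht; simp [expAuxQ]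
  | succ n ih =>
    intro t ht
    rw [iteratedDeriv_succ]
    have heq : iteratedDeriv n (fun x : ℝ => Real.exp (-1 / x))
        =ᶠ[nhds t] fun x => (expAuxQ n).eval (-1 / x) * Real.exp (-1 / x) :=
      Filter.eventuallyEq_of_mem (Iio_mem_nhds ht) fun s hs => ih s hs
    rw [heq.deriv_eq]
    exact (expAux_hasDerivAt n ht).deriv

/-- `g(t) = exp (-1/t)` is absolutely monotonic on `(-∞, 0)`:
for every `i ≥ 0` and every `t < 0`, `g^(i)(t) ≥ 0`. -/
theorem exp_neg_one_div_absolutely_monotonic (i : ℕ) (t : ℝ) (ht : t < 0) :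
    0 ≤ iteratedDeriv i (fun x : ℝ => Real.exp (-1 / x)) t := by
  rw [expAux_iteratedDeriv i t ht]
  have ht' : (0:ℝ) < -t := neg_pos.mpr ht
  have hu : (0:ℝ) ≤ -1 / t := by
    rw [show -1 / t = 1 / (-t) by ring]
    exact (div_pos one_pos ht').le
  exact mul_nonneg (expAuxQ_eval_nonneg i hu) (Real.exp_nonneg _)
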